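/- Let Ω ⊆ ℝⁿ be measurable, let p : Ω → [1,∞) be bounded measurable, let r : Ω → [0,∞) be bounded measurable, and let a ∈ L^∞(Ω) with a ≥ 0. Then for every measurable set A ⊆ Ω with 0 < |A| < ∞: min{ |A|^{1/p⁺_A}, |A|^{1/p⁻_A} } ≤ ‖1_A‖_{L^Φ(Ω)} ≤ 2 (1+‖a‖_∞)^{1/p⁻_A} · max{ |A|^{1/p⁺_A} (log(e + 1/|A|))^{r⁺_A}, |A|^{1/p⁻_A} (log(1+e))^{r⁺_A} }. -/

import Mathlib

open MeasureTheory Set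
open scoped ENNReal

/-- The function `Φ(x,t) = t^{p(x)} + a(x) t^{p(x)} (log(e+t))^{r(x)}`. -/
noncomputable def Phi2 {n : ℕ} (p r a : EuclideanSpace ℝ (Fin n) → ℝ)
    (x : EuclideanSpace ℝ (Fin n)) (t : ℝ) : ℝ :=
  t ^ p x + a x * t ^ p x * (Real.log (Real.exp 1 + t)) ^ r x

/-- The Luxemburg (quasi-)norm `‖u‖_{L^Φ(Ω)} = inf{λ > 0 : ∫_Ω Φ(x,|u(x)|/λ) dx ≤ 1}`,
valued in `ℝ≥0∞`, with `inf ∅ = ∞`. -/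
noncomputable def luxNorm {n : ℕ} (Ω : Set (EuclideanSpace ℝ (Fin n)))
    (Φ : EuclideanSpace ℝ (Fin n) → ℝ → ℝ)
    (u : EuclideanSpace ℝ (Fin n) → ℝ) : ℝ≥0∞ :=
  sInf ((fun l : ℝ => ENNReal.ofReal l) ''
    {l : ℝ | 0 < l ∧ (∫⁻ x in Ω, ENNReal.ofReal (Φ x (|u x| / l))) ≤ 1})

set_option maxHeartbeats 2000000 in
/-- two-sided estimate for the Luxemburg norm of an indicator when
`r ≥ 0`:
`min{|A|^{1/p⁺_A}, |A|^{1/p⁻_A}} ≤ ‖1_A‖_{L^Φ(Ω)} ≤ 2(1+‖a‖_∞)^{1/p⁻_A} ·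
max{|A|^{1/p⁺_A} (log(e+1/|A|))^{r⁺_A}, |A|^{1/p⁻_A} (log(1+e))^{r⁺_A}}`. -/
theorem stmt_12 {n : ℕ}
    (Ω : Set (EuclideanSpace ℝ (Fin n))) (hΩm : MeasurableSet Ω)
    (p r a : EuclideanSpace ℝ (Fin n) → ℝ)
    (hpm : Measurable p) (hp1 : ∀ x ∈ Ω, 1 ≤ p x) (hpB : BddAbove (p '' Ω))
    (hrm : Measurable r) (hr0 : ∀ x ∈ Ω, 0 ≤ r x) (hrB : BddAbove (r '' Ω))
    (ham : Measurable a) (ha0 : ∀ x ∈ Ω, 0 ≤ a x) (haB : BddAbove (a '' Ω)) :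
    ∀ A : Set (EuclideanSpace ℝ (Fin n)), A ⊆ Ω → MeasurableSet A →
      0 < volume A → volume A < ⊤ →
      min (ENNReal.ofReal ((volume A).toReal ^ (1 / sSup (p '' A))))
          (ENNReal.ofReal ((volume A).toReal ^ (1 / sInf (p '' A)))) ≤
        luxNorm Ω (Phi2 p r a) (A.indicator 1) ∧
      luxNorm Ω (Phi2 p r a) (A.indicator 1) ≤
        ENNReal.ofReal (2 * (1 + sSup (a '' Ω)) ^ (1 / sInf (p '' A)) *
          max ((volume A).toReal ^ (1 / sSup (p '' A)) *
                (Real.log (Real.exp 1 + 1 / (volume A).toReal)) ^ sSup (r '' A))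
              ((volume A).toReal ^ (1 / sInf (p '' A)) *
                (Real.log (1 + Real.exp 1)) ^ sSup (r '' A))) := by
  intro A hA hAm h0 hfin
  have hAne : A.Nonempty := nonempty_of_measure_ne_zero h0.ne'
  set μ := (volume A).toReal with hμdef
  have hμ0 : 0 < μ := ENNReal.toReal_pos h0.ne' hfin.ne
  have hvolA : volume A = ENNReal.ofReal μ := (ENNReal.ofReal_toReal hfin.ne).symm
  set pS := sSup (p '' A) with hpSdef
  set pI := sInf (p '' A) with hpIdef
  set rS := sSup (r '' A) with hrSdef
  set S := sSup (a '' Ω) with hSdef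
  have hpA_bdd : BddAbove (p '' A) := hpB.mono (image_mono hA)
  have hrA_bdd : BddAbove (r '' A) := hrB.mono (image_mono hA)
  have hpA_bddb : BddBelow (p '' A) := by
    refine ⟨1, ?_⟩; rintro y ⟨x, hx, rfl⟩; exact hp1 x (hA hx)
  have hpAne : (p '' A).Nonempty := hAne.image _
  have hpI1 : 1 ≤ pI := le_csInf hpAne (by rintro y ⟨x, hx, rfl⟩; exact hp1 x (hA hx))
  have hpI0 : 0 < pI := lt_of_lt_of_le one_pos hpI1
  have hpIle : ∀ x ∈ A, pI ≤ p x := fun x hx => csInf_le hpA_bddb (mem_image_of_mem _ hx)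
  have hpSle : ∀ x ∈ A, p x ≤ pS := fun x hx => le_csSup hpA_bdd (mem_image_of_mem _ hx)
  obtain ⟨x₀, hx₀⟩ := hAne
  have hpS1 : 1 ≤ pS := le_trans (hp1 x₀ (hA hx₀)) (hpSle x₀ hx₀)
  have hpS0 : 0 < pS := lt_of_lt_of_le one_pos hpS1
  have hpIpS : pI ≤ pS := le_trans (hpIle x₀ hx₀) (hpSle x₀ hx₀)
  have hrSle : ∀ x ∈ A, r x ≤ rS := fun x hx => le_csSup hrA_bdd (mem_image_of_mem _ hx)
  have hrS0 : 0 ≤ rS := le_trans (hr0 x₀ (hA hx₀)) (hrSle x₀ hx₀)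
  have hSle : ∀ x ∈ Ω, a x ≤ S := fun x hx => le_csSup haB (mem_image_of_mem _ hx)
  have hS0 : 0 ≤ S := le_trans (ha0 x₀ (hA hx₀)) (hSle x₀ (hA hx₀))
  have he1 : (1 : ℝ) ≤ Real.exp 1 := by
    have := Real.exp_one_gt_d9; linarith
  have hind : ∀ x ∈ A, |A.indicator (1 : EuclideanSpace ℝ (Fin n) → ℝ) x| = 1 := by
    intro x hx; simp [Set.indicator_of_mem hx]
  have hindn : ∀ x ∉ A, |A.indicator (1 : EuclideanSpace ℝ (Fin n) → ℝ) x| = 0 := by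
    intro x hx; simp [Set.indicator_of_notMem hx]
  constructor
  · -- lower bound
    refine le_sInf ?_
    rintro b ⟨l, ⟨hl0, hint⟩, rfl⟩
    have hil0 : 0 < 1 / l := by positivity
    have main : ∀ q : ℝ, 0 < q → (∀ x ∈ A, ((1:ℝ)/l) ^ q ≤ (1/l) ^ p x) → μ ^ (1/q) ≤ l := by
      intro q hq hmono
      have hptw : ∀ x ∈ A,
          ENNReal.ofReal ((1/l) ^ q) ≤
            ENNReal.ofReal (Phi2 p r a x (|A.indicator 1 x| / l)) := by
        intro x hx
        apply ENNReal.ofReal_le_ofReal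
        rw [hind x hx]
        refine le_trans (hmono x hx) ?_
        unfold Phi2
        have hlog : 0 ≤ Real.log (Real.exp 1 + 1/l) := by
          apply Real.log_nonneg; linarith
        have h2 : 0 ≤ a x * (1/l) ^ p x * Real.log (Real.exp 1 + 1/l) ^ r x :=
          mul_nonneg (mul_nonneg (ha0 x (hA hx)) (Real.rpow_nonneg hil0.le _))
            (Real.rpow_nonneg hlog _)
        linarith
      have h1 : ENNReal.ofReal ((1/l) ^ q) * volume A ≤ 1 := by
        calc ENNReal.ofReal ((1/l) ^ q) * volume A
            = ∫⁻ _ in A, ENNReal.ofReal ((1/l) ^ q) := (setLIntegral_const A _).symm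
          _ ≤ ∫⁻ x in A, ENNReal.ofReal (Phi2 p r a x (|A.indicator 1 x| / l)) :=
              setLIntegral_mono' hAm hptw
          _ ≤ ∫⁻ x in Ω, ENNReal.ofReal (Phi2 p r a x (|A.indicator 1 x| / l)) :=
              lintegral_mono_set hA
          _ ≤ 1 := hint
      rw [hvolA, ← ENNReal.ofReal_mul (Real.rpow_nonneg hil0.le _)] at h1
      have hreal : (1/l) ^ q * μ ≤ 1 := ENNReal.ofReal_le_one.mp h1
      have hlq : 0 < l ^ q := Real.rpow_pos_of_pos hl0 _
      have hinv : ((1:ℝ)/l) ^ q = (l ^ q)⁻¹ := by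
        rw [one_div, Real.inv_rpow hl0.le]
      rw [hinv] at hreal
      have hμlq : μ ≤ l ^ q := by
        rw [inv_mul_le_iff₀ hlq] at hreal; linarith
      calc μ ^ (1/q) ≤ (l ^ q) ^ (1/q) :=
            Real.rpow_le_rpow hμ0.le hμlq (by positivity)
        _ = l := by rw [one_div, Real.rpow_rpow_inv hl0.le hq.ne']
    rcases le_or_gt 1 l with hl1 | hl1
    · have hil1 : (1:ℝ)/l ≤ 1 := by
        rw [div_le_one hl0]; exact hl1
      have h := main pS hpS0 fun x hx =>
        Real.rpow_le_rpow_of_exponent_ge hil0 hil1 (hpSle x hx)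
      exact le_trans (min_le_left _ _) (ENNReal.ofReal_le_ofReal h)
    · have hil1 : (1:ℝ) ≤ 1/l := by
        rw [le_div_iff₀ hl0]; linarith
      have h := main pI hpI0 fun x hx =>
        Real.rpow_le_rpow_of_exponent_le hil1 (hpIle x hx)
      exact le_trans (min_le_right _ _) (ENNReal.ofReal_le_ofReal h)
  · -- upper bound
    set L0 := Real.log (Real.exp 1 + 1/μ) with hL0def
    set L1 := Real.log (1 + Real.exp 1) with hL1def
    set M := max (μ ^ (1/pS) * L0 ^ rS) (μ ^ (1/pI) * L1 ^ rS) with hMdef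
    set c := (1 + S) ^ (1/pI) with hcdef
    set lam := 2 * c * M with hlamdef
    have hL0_1 : 1 ≤ L0 := by
      rw [hL0def, Real.le_log_iff_exp_le (by positivity)]
      have : 0 < 1/μ := by positivity
      linarith
    have hL1_1 : 1 ≤ L1 := by
      rw [hL1def, Real.le_log_iff_exp_le (by positivity)]
      linarith
    have hc1 : 1 ≤ c := Real.one_le_rpow (by linarith) (by positivity)
    have hMl : μ ^ (1/pS) * L0 ^ rS ≤ M := le_max_left _ _
    have hMr : μ ^ (1/pI) * L1 ^ rS ≤ M := le_max_right _ _
    have hMpos : 0 < M := lt_of_lt_of_le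
      (mul_pos (Real.rpow_pos_of_pos hμ0 _) (Real.rpow_pos_of_pos (by linarith) _)) hMl
    have hlam_pos : 0 < lam := by
      rw [hlamdef]; positivity
    set L := Real.log (Real.exp 1 + 1/lam) with hLdef
    have hL_1 : 1 ≤ L := by
      rw [hLdef, Real.le_log_iff_exp_le (by positivity)]
      have : 0 < 1/lam := by positivity
      linarith
    have hlamq : ∀ q : ℝ, lam ^ q = 2 ^ q * c ^ q * M ^ q := fun q => by
      rw [hlamdef, Real.mul_rpow (by positivity) hMpos.le,
        Real.mul_rpow (by norm_num) (by positivity)]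
    have hcpI : c ^ pI = 1 + S := by
      rw [hcdef, one_div, ← Real.rpow_mul (by linarith), inv_mul_cancel₀ hpI0.ne',
        Real.rpow_one]
    have key : ∃ q : ℝ, 0 < q ∧ (∀ x ∈ A, (1/lam) ^ p x ≤ (1/lam) ^ q) ∧
        μ * ((1 + S) * L ^ rS) ≤ lam ^ q := by
      have hillam : 0 < 1/lam := by positivity
      rcases le_or_gt 1 lam with hl1 | hl1
      · refine ⟨pI, hpI0, fun x hx =>
          Real.rpow_le_rpow_of_exponent_ge hillam (by rw [div_le_one hlam_pos]; exact hl1)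
            (hpIle x hx), ?_⟩
        have hLL1 : L ≤ L1 := by
          rw [hLdef, hL1def]
          apply (Real.log_le_log_iff (by positivity) (by positivity)).mpr
          have : 1/lam ≤ 1 := by rw [div_le_one hlam_pos]; exact hl1
          linarith
        have hLr : L ^ rS ≤ L1 ^ rS := Real.rpow_le_rpow (by linarith) hLL1 hrS0
        have hMq : μ * L1 ^ rS ≤ M ^ pI := by
          have h1 : (μ ^ (1/pI) * L1 ^ rS) ^ pI ≤ M ^ pI :=
            Real.rpow_le_rpow (by positivity) hMr hpI0.le
          have h2 : (μ ^ (1/pI) * L1 ^ rS) ^ pI = μ * (L1 ^ rS) ^ pI := by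
            rw [Real.mul_rpow (by positivity) (by positivity), one_div,
              Real.rpow_inv_rpow hμ0.le hpI0.ne']
          have h3 : L1 ^ rS ≤ (L1 ^ rS) ^ pI := by
            calc L1 ^ rS = (L1 ^ rS) ^ (1:ℝ) := (Real.rpow_one _).symm
              _ ≤ (L1 ^ rS) ^ pI :=
                Real.rpow_le_rpow_of_exponent_le (Real.one_le_rpow hL1_1 hrS0) hpI1
          calc μ * L1 ^ rS ≤ μ * (L1 ^ rS) ^ pI := mul_le_mul_of_nonneg_left h3 hμ0.le
            _ = (μ ^ (1/pI) * L1 ^ rS) ^ pI := h2.symm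
            _ ≤ M ^ pI := h1
        have h2pI : (1:ℝ) ≤ 2 ^ pI := Real.one_le_rpow (by norm_num) hpI0.le
        rw [hlamq pI, hcpI]
        have hMpq : 0 < M ^ pI := Real.rpow_pos_of_pos hMpos _
        calc μ * ((1 + S) * L ^ rS) = (1 + S) * (μ * L ^ rS) := by ring
          _ ≤ (1 + S) * (μ * L1 ^ rS) :=
            mul_le_mul_of_nonneg_left (mul_le_mul_of_nonneg_left hLr hμ0.le) (by linarith)
          _ ≤ (1 + S) * M ^ pI := mul_le_mul_of_nonneg_left hMq (by linarith)
          _ = 1 * ((1 + S) * M ^ pI) := (one_mul _).symm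
          _ ≤ 2 ^ pI * ((1 + S) * M ^ pI) :=
            mul_le_mul_of_nonneg_right h2pI
              (mul_nonneg (by linarith) hMpq.le)
          _ = 2 ^ pI * (1 + S) * M ^ pI := (mul_assoc _ _ _).symm
      · refine ⟨pS, hpS0, fun x hx =>
          Real.rpow_le_rpow_of_exponent_le (by rw [le_div_iff₀ hlam_pos]; linarith)
            (hpSle x hx), ?_⟩
        have hL0r : 1 ≤ L0 ^ rS := Real.one_le_rpow hL0_1 hrS0
        have hμpow0 : (0:ℝ) ≤ μ ^ (1/pS) := Real.rpow_nonneg hμ0.le _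
        have hM1 : μ ^ (1/pS) ≤ M :=
          le_trans (le_mul_of_one_le_right hμpow0 hL0r) hMl
        have hlam_ge : 2 * μ ^ (1/pS) ≤ lam := by
          rw [hlamdef]
          have hcM : 1 * M ≤ c * M := mul_le_mul_of_nonneg_right hc1 hMpos.le
          calc 2 * μ ^ (1/pS) ≤ 2 * M := by linarith
            _ ≤ 2 * (c * M) := by linarith
            _ = 2 * c * M := by ring
        have hμpS1 : μ ^ (1/pS) < 1 := by linarith
        have hμ1 : μ < 1 := by
          have := Real.rpow_lt_one (Real.rpow_nonneg hμ0.le _) hμpS1 hpS0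
          rwa [one_div, Real.rpow_inv_rpow hμ0.le hpS0.ne'] at this
        have hμle : μ ≤ μ ^ (1/pS) := by
          have := Real.rpow_le_rpow_of_exponent_ge hμ0 hμ1.le
            (show 1/pS ≤ 1 by rw [div_le_one hpS0]; exact hpS1)
          rwa [Real.rpow_one] at this
        have hμlam : μ ≤ lam := by linarith
        have hLL0 : L ≤ L0 := by
          rw [hLdef, hL0def]
          apply (Real.log_le_log_iff (by positivity) (by positivity)).mpr
          have := one_div_le_one_div_of_le hμ0 hμlam
          linarith
        have hLr : L ^ rS ≤ L0 ^ rS := Real.rpow_le_rpow (by linarith) hLL0 hrS0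
        have hMq : μ * L0 ^ rS ≤ M ^ pS := by
          have h1 : (μ ^ (1/pS) * L0 ^ rS) ^ pS ≤ M ^ pS :=
            Real.rpow_le_rpow (by positivity) hMl hpS0.le
          have h2 : (μ ^ (1/pS) * L0 ^ rS) ^ pS = μ * (L0 ^ rS) ^ pS := by
            rw [Real.mul_rpow (by positivity) (by positivity), one_div,
              Real.rpow_inv_rpow hμ0.le hpS0.ne']
          have h3 : L0 ^ rS ≤ (L0 ^ rS) ^ pS := by
            calc L0 ^ rS = (L0 ^ rS) ^ (1:ℝ) := (Real.rpow_one _).symm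
              _ ≤ (L0 ^ rS) ^ pS :=
                Real.rpow_le_rpow_of_exponent_le hL0r hpS1
          calc μ * L0 ^ rS ≤ μ * (L0 ^ rS) ^ pS := mul_le_mul_of_nonneg_left h3 hμ0.le
            _ = (μ ^ (1/pS) * L0 ^ rS) ^ pS := h2.symm
            _ ≤ M ^ pS := h1
        have h2pS : (1:ℝ) ≤ 2 ^ pS := Real.one_le_rpow (by norm_num) hpS0.le
        have hcpS : 1 + S ≤ c ^ pS := by
          rw [hcdef, ← Real.rpow_mul (by linarith)]
          have h1 : (1:ℝ) ≤ 1/pI * pS := by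
            rw [one_div, inv_mul_eq_div, le_div_iff₀ hpI0]; linarith
          calc (1 + S) = (1 + S) ^ (1:ℝ) := (Real.rpow_one _).symm
            _ ≤ (1 + S) ^ (1/pI * pS) :=
              Real.rpow_le_rpow_of_exponent_le (by linarith) h1
        rw [hlamq pS]
        have hMpq : 0 < M ^ pS := Real.rpow_pos_of_pos hMpos _
        calc μ * ((1 + S) * L ^ rS) = (1 + S) * (μ * L ^ rS) := by ring
          _ ≤ (1 + S) * (μ * L0 ^ rS) :=
            mul_le_mul_of_nonneg_left (mul_le_mul_of_nonneg_left hLr hμ0.le) (by linarith)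
          _ ≤ (1 + S) * M ^ pS := mul_le_mul_of_nonneg_left hMq (by linarith)
          _ ≤ c ^ pS * M ^ pS := mul_le_mul_of_nonneg_right hcpS hMpq.le
          _ = 1 * (c ^ pS * M ^ pS) := (one_mul _).symm
          _ ≤ 2 ^ pS * (c ^ pS * M ^ pS) :=
            mul_le_mul_of_nonneg_right h2pS
              (mul_nonneg (Real.rpow_pos_of_pos (by linarith) _).le hMpq.le)
          _ = 2 ^ pS * c ^ pS * M ^ pS := (mul_assoc _ _ _).symm
    obtain ⟨q, hq0, hqmono, hqineq⟩ := key
    set C := (1/lam) ^ q * ((1 + S) * L ^ rS) with hCdef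
    have hLpos : (0:ℝ) < L := by linarith
    have hC0 : 0 ≤ C := by
      rw [hCdef]; positivity
    have hCb : ∀ x ∈ A, Phi2 p r a x (|A.indicator 1 x| / lam) ≤ C := by
      intro x hx
      rw [hind x hx]
      unfold Phi2
      have hLrx : Real.log (Real.exp 1 + 1/lam) ^ r x ≤ L ^ rS := by
        rw [← hLdef]
        exact Real.rpow_le_rpow_of_exponent_le hL_1 (hrSle x hx)
      have hax : a x ≤ S := hSle x (hA hx)
      have hax0 : 0 ≤ a x := ha0 x (hA hx)
      have hLr1 : 1 ≤ L ^ rS := Real.one_le_rpow hL_1 hrS0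
      have ht0 : 0 ≤ ((1:ℝ)/lam) ^ p x := Real.rpow_nonneg (by positivity) _
      have hstep : ((1:ℝ)/lam) ^ p x + a x * (1/lam) ^ p x *
          Real.log (Real.exp 1 + 1/lam) ^ r x ≤
          (1/lam) ^ p x * ((1 + S) * L ^ rS) := by
        have hLrx0 : 0 ≤ Real.log (Real.exp 1 + 1/lam) ^ r x :=
          Real.rpow_nonneg (by rw [← hLdef]; linarith) _
        nlinarith [mul_le_mul hax hLrx hLrx0 hS0]
      refine le_trans hstep ?_
      rw [hCdef]
      exact mul_le_mul_of_nonneg_right (hqmono x hx) (by positivity)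
    have hCμ : C * μ ≤ 1 := by
      have hinv : ((1:ℝ)/lam) ^ q = (lam ^ q)⁻¹ := by
        rw [one_div, Real.inv_rpow hlam_pos.le]
      have hlq : 0 < lam ^ q := Real.rpow_pos_of_pos hlam_pos _
      calc C * μ = (μ * ((1 + S) * L ^ rS)) * (lam ^ q)⁻¹ := by
            rw [hCdef, hinv]; ring
        _ ≤ lam ^ q * (lam ^ q)⁻¹ :=
            mul_le_mul_of_nonneg_right hqineq (inv_nonneg.mpr hlq.le)
        _ = 1 := mul_inv_cancel₀ hlq.ne'
    have hint : (∫⁻ x in Ω, ENNReal.ofReal (Phi2 p r a x (|A.indicator 1 x| / lam))) ≤ 1 := by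
      calc (∫⁻ x in Ω, ENNReal.ofReal (Phi2 p r a x (|A.indicator 1 x| / lam)))
          ≤ ∫⁻ x in Ω, A.indicator (fun _ => ENNReal.ofReal C) x := by
            apply setLIntegral_mono' hΩm
            intro x hx
            by_cases hxA : x ∈ A
            · refine le_trans (ENNReal.ofReal_le_ofReal (hCb x hxA)) (le_of_eq ?_)
              exact (Set.indicator_of_mem hxA fun _ => ENNReal.ofReal C).symm
            · have hz : Phi2 p r a x (|A.indicator 1 x| / lam) = 0 := by
                rw [hindn x hxA]
                unfold Phi2
                rw [zero_div, Real.zero_rpow (by have := hp1 x hx; linarith : p x ≠ 0)]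
                ring
              rw [hz]
              simp
        _ = ENNReal.ofReal C * volume A := by
            rw [lintegral_indicator hAm, setLIntegral_const, Measure.restrict_apply hAm,
              inter_eq_self_of_subset_left hA]
        _ ≤ 1 := by
            rw [hvolA, ← ENNReal.ofReal_mul hC0]
            exact ENNReal.ofReal_le_one.mpr hCμ
    exact sInf_le ⟨lam, ⟨hlam_pos, hint⟩, rfl⟩
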